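/- arXiv:2210.13500 — 9 statements merged into one kernel-verified Lean document; each statement's English description precedes it below -/
import Mathlib

section
/- Let N ≥ 1, let H be a finite-dimensional complex inner product space, let ω₀ ∈ H be a unit vector, and let X_P, Z_P be unitary operators on H. Let X_L, Z_L denote the generalized Pauli operators on ℂ^N (X_L e_j = e_{j+1 mod N}, Z_L e_j = exp(2πij/N) e_j) and let e₀ be the first standard basis vector. Suppose that for every finite sequence of integer pairs (a₁,b₁),…,(a_m,b_m), the correlation functions agree exactly: ⟪ω₀, X_P^{a₁} Z_P^{b₁} ⋯ X_P^{a_m} Z_P^{b_m} ω₀⟫ = ⟪e₀, X_L^{a₁} Z_L^{b₁} ⋯ X_L^{a_m} Z_L^{b_m} e₀⟫. Then there exists a linear isometry V : ℂ^N → H such that for all integers a, b: (X_P^a Z_P^b) ∘ V = V ∘ (X_L^a Z_L^b), and X_P^a Z_P^b commutes with the projector V ∘ V†. -/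
open ContinuousLinearMap

set_option maxHeartbeats 1000000

section helpers

open Fin.CommRing

variable {F : Type*} [NormedAddCommGroup F] [InnerProductSpace ℂ F] [CompleteSpace F]

lemma unitary_coe_mul_apply (u v : unitary (F →L[ℂ] F)) (x : F) :
    ((u * v : unitary (F →L[ℂ] F)) : F →L[ℂ] F) x
      = (u : F →L[ℂ] F) ((v : F →L[ℂ] F) x) := rfl

lemma unitary_inner_left (u : unitary (F →L[ℂ] F)) (x y : F) :
    (inner ℂ ((u : F →L[ℂ] F) x) y : ℂ)
      = inner ℂ x (((u⁻¹ : unitary (F →L[ℂ] F)) : F →L[ℂ] F) y) := by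
  have hy : y = (u : F →L[ℂ] F) (((u⁻¹ : unitary (F →L[ℂ] F)) : F →L[ℂ] F) y) := by
    rw [← unitary_coe_mul_apply, mul_inv_cancel]
    rfl
  conv_lhs => rw [hy]
  exact Unitary.inner_map_map u x _

lemma adjoint_unitary_inv (u : unitary (F →L[ℂ] F)) :
    ContinuousLinearMap.adjoint ((u⁻¹ : unitary (F →L[ℂ] F)) : F →L[ℂ] F)
      = (u : F →L[ℂ] F) := by
  rw [← ContinuousLinearMap.star_eq_adjoint, ← Unitary.star_eq_inv, Unitary.coe_star, star_star]

variable {N : ℕ} [NeZero N]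

lemma XL_zpow_single
    (XL : unitary (EuclideanSpace ℂ (Fin N) →L[ℂ] EuclideanSpace ℂ (Fin N)))
    (hXL : ∀ j : Fin N,
      (XL : EuclideanSpace ℂ (Fin N) →L[ℂ] EuclideanSpace ℂ (Fin N))
          (EuclideanSpace.single j 1)
        = EuclideanSpace.single (j + 1) 1)
    (c : ℤ) (j : Fin N) :
    ((XL ^ c : unitary (EuclideanSpace ℂ (Fin N) →L[ℂ] EuclideanSpace ℂ (Fin N))) :
        EuclideanSpace ℂ (Fin N) →L[ℂ] EuclideanSpace ℂ (Fin N))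
      (EuclideanSpace.single j 1)
      = EuclideanSpace.single (j + (c : Fin N)) 1 := by
  have hinv : ∀ k : Fin N,
      ((XL⁻¹ : unitary _) : EuclideanSpace ℂ (Fin N) →L[ℂ] EuclideanSpace ℂ (Fin N))
        (EuclideanSpace.single k 1) = EuclideanSpace.single (k - 1) 1 := by
    intro k
    have h1 : ((XL⁻¹ : unitary _) : EuclideanSpace ℂ (Fin N) →L[ℂ] EuclideanSpace ℂ (Fin N))
        ((XL : EuclideanSpace ℂ (Fin N) →L[ℂ] EuclideanSpace ℂ (Fin N))
          (EuclideanSpace.single (k - 1) 1)) = EuclideanSpace.single (k - 1) 1 := by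
      rw [← unitary_coe_mul_apply, inv_mul_cancel]
      rfl
    rw [hXL (k - 1), sub_add_cancel] at h1
    exact h1
  induction c using Int.induction_on generalizing j with
  | zero =>
      rw [zpow_zero, Int.cast_zero, add_zero]
      rfl
  | succ n ih =>
      rw [zpow_add_one, unitary_coe_mul_apply, hXL j, ih (j + 1)]
      congr 1
      push_cast
      ring
  | pred n ih =>
      rw [zpow_sub_one, unitary_coe_mul_apply, hinv j, ih (j - 1)]
      congr 1
      push_cast
      ring

lemma ZL_zpow_single
    (ZL : unitary (EuclideanSpace ℂ (Fin N) →L[ℂ] EuclideanSpace ℂ (Fin N)))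
    (hZL : ∀ j : Fin N,
      (ZL : EuclideanSpace ℂ (Fin N) →L[ℂ] EuclideanSpace ℂ (Fin N))
          (EuclideanSpace.single j 1)
        = Complex.exp (2 * Real.pi * Complex.I * (j : ℕ) / N) • EuclideanSpace.single j 1)
    (c : ℤ) (j : Fin N) :
    ((ZL ^ c : unitary (EuclideanSpace ℂ (Fin N) →L[ℂ] EuclideanSpace ℂ (Fin N))) :
        EuclideanSpace ℂ (Fin N) →L[ℂ] EuclideanSpace ℂ (Fin N))
      (EuclideanSpace.single j 1)
      = Complex.exp (2 * Real.pi * Complex.I * (j : ℕ) / N * c) •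
          EuclideanSpace.single j 1 := by
  have hexp0 : Complex.exp (2 * Real.pi * Complex.I * (j : ℕ) / N) ≠ 0 :=
    Complex.exp_ne_zero _
  have hinv : ((ZL⁻¹ : unitary _) : EuclideanSpace ℂ (Fin N) →L[ℂ] EuclideanSpace ℂ (Fin N))
      (EuclideanSpace.single j 1)
      = Complex.exp (-(2 * Real.pi * Complex.I * (j : ℕ) / N)) •
          EuclideanSpace.single j 1 := by
    have h1 : ((ZL⁻¹ : unitary _) : EuclideanSpace ℂ (Fin N) →L[ℂ] EuclideanSpace ℂ (Fin N))
        ((ZL : EuclideanSpace ℂ (Fin N) →L[ℂ] EuclideanSpace ℂ (Fin N))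
          (EuclideanSpace.single j 1)) = EuclideanSpace.single j 1 := by
      rw [← unitary_coe_mul_apply, inv_mul_cancel]
      rfl
    rw [hZL j, map_smul] at h1
    rw [Complex.exp_neg]
    exact ((inv_smul_eq_iff₀ hexp0).mpr h1.symm).symm
  induction c using Int.induction_on with
  | zero =>
      rw [zpow_zero, Int.cast_zero, mul_zero, Complex.exp_zero, one_smul]
      rfl
  | succ n ih =>
      rw [zpow_add_one, unitary_coe_mul_apply, hZL j, map_smul, ih, smul_smul,
        ← Complex.exp_add]
      congr 2
      push_cast
      ring
  | pred n ih =>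
      rw [zpow_sub_one, unitary_coe_mul_apply, hinv, map_smul, ih, smul_smul,
        ← Complex.exp_add]
      congr 2
      push_cast
      ring

end helpers

/-- Exact reconstruction theorem: exactly matching correlation functions of the
generalized Pauli excitation operators between the physical system `(H, ω₀, X_P, Z_P)`
and the logical system `(ℂ^N, e₀, X_L, Z_L)` imply the existence of an encoding
isometry `V` intertwining logical and physical operators and commuting with the
code-space projector `V V†`. -/
theorem exact_reconstruction_isometry
    (N : ℕ) (hN : 1 ≤ N) [NeZero N]
    (H : Type*) [NormedAddCommGroup H] [InnerProductSpace ℂ H] [FiniteDimensional ℂ H]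
    (ω₀ : H) (hω₀ : ‖ω₀‖ = 1)
    (XP ZP : unitary (H →L[ℂ] H))
    (XL ZL : unitary (EuclideanSpace ℂ (Fin N) →L[ℂ] EuclideanSpace ℂ (Fin N)))
    (hXL : ∀ j : Fin N,
      (XL : EuclideanSpace ℂ (Fin N) →L[ℂ] EuclideanSpace ℂ (Fin N))
          (EuclideanSpace.single j 1)
        = EuclideanSpace.single (j + 1) 1)
    (hZL : ∀ j : Fin N,
      (ZL : EuclideanSpace ℂ (Fin N) →L[ℂ] EuclideanSpace ℂ (Fin N))
          (EuclideanSpace.single j 1)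
        = Complex.exp (2 * Real.pi * Complex.I * (j : ℕ) / N) • EuclideanSpace.single j 1)
    (hcorr : ∀ l : List (ℤ × ℤ),
      (inner ℂ ω₀
        (((((l.map fun p => XP ^ p.1 * ZP ^ p.2).prod : unitary (H →L[ℂ] H)) :
            H →L[ℂ] H)) ω₀) : ℂ)
      = (inner ℂ (EuclideanSpace.single (0 : Fin N) (1 : ℂ))
        (((((l.map fun p => XL ^ p.1 * ZL ^ p.2).prod :
              unitary (EuclideanSpace ℂ (Fin N) →L[ℂ] EuclideanSpace ℂ (Fin N))) :
            EuclideanSpace ℂ (Fin N) →L[ℂ] EuclideanSpace ℂ (Fin N)))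
          (EuclideanSpace.single (0 : Fin N) (1 : ℂ))) : ℂ)) :
    ∃ V : EuclideanSpace ℂ (Fin N) →ₗᵢ[ℂ] H,
      (∀ (a b : ℤ) (x : EuclideanSpace ℂ (Fin N)),
        ((XP ^ a * ZP ^ b : unitary (H →L[ℂ] H)) : H →L[ℂ] H) (V x)
          = V (((XL ^ a * ZL ^ b :
              unitary (EuclideanSpace ℂ (Fin N) →L[ℂ] EuclideanSpace ℂ (Fin N))) :
              EuclideanSpace ℂ (Fin N) →L[ℂ] EuclideanSpace ℂ (Fin N)) x)) ∧
      (∀ a b : ℤ,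
        Commute ((XP ^ a * ZP ^ b : unitary (H →L[ℂ] H)) : H →L[ℂ] H)
          (V.toContinuousLinearMap ∘L adjoint V.toContinuousLinearMap)) := by
  classical
  letI : CommRing (Fin N) := Fin.instCommRing N
  set e0 : EuclideanSpace ℂ (Fin N) := EuclideanSpace.single (0 : Fin N) (1 : ℂ) with he0
  -- inner product of e0 with a basis vector
  have hinner01 : ∀ k : Fin N,
      (inner ℂ e0 (EuclideanSpace.single k (1 : ℂ)) : ℂ) = if k = 0 then 1 else 0 := by
    intro k
    rw [he0]
    rw [EuclideanSpace.inner_single_left]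
    simp [EuclideanSpace.single_apply, eq_comm]
  -- single-factor correlators
  have hc1 : ∀ c : ℤ,
      (inner ℂ ω₀ (((XP ^ c : unitary (H →L[ℂ] H)) : H →L[ℂ] H) ω₀) : ℂ)
        = inner ℂ e0 (((XL ^ c : unitary _) :
            EuclideanSpace ℂ (Fin N) →L[ℂ] EuclideanSpace ℂ (Fin N)) e0) := by
    intro c
    have h := hcorr [(c, 0)]
    simpa using h
  -- the frame
  set g : ℤ → H := fun c => ((XP ^ c : unitary (H →L[ℂ] H)) : H →L[ℂ] H) ω₀ with hg
  have hgc : ∀ c : ℤ, g c = ((XP ^ c : unitary (H →L[ℂ] H)) : H →L[ℂ] H) ω₀ := fun _ => rfl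
  have hgnorm : ∀ c : ℤ, ‖g c‖ = 1 := by
    intro c
    rw [hgc]
    exact (Unitary.norm_map _ _).trans hω₀
  have hcast0 : ((0 : Fin N) + ((0:ℤ) : Fin N)) = 0 := by push_cast; ring
  have hg_inner : ∀ c d : ℤ,
      (inner ℂ (g c) (g d) : ℂ) = if ((d - c : ℤ) : Fin N) = 0 then 1 else 0 := by
    intro c d
    have h2 : g d = ((XP ^ c : unitary (H →L[ℂ] H)) : H →L[ℂ] H) (g (d - c)) := by
      rw [hgc, hgc, ← unitary_coe_mul_apply, ← zpow_add]
      congr 2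
      ring
    rw [h2]
    have h3 := Unitary.inner_map_map (XP ^ c) ω₀ (g (d - c))
    calc (inner ℂ (((XP ^ c : unitary (H →L[ℂ] H)) : H →L[ℂ] H) ω₀)
            (((XP ^ c : unitary (H →L[ℂ] H)) : H →L[ℂ] H) (g (d - c))) : ℂ)
        = inner ℂ ω₀ (g (d - c)) := Unitary.inner_map_map _ _ _
      _ = inner ℂ e0 (((XL ^ (d - c) : unitary _) :
            EuclideanSpace ℂ (Fin N) →L[ℂ] EuclideanSpace ℂ (Fin N)) e0) := hc1 (d - c)
      _ = if ((d - c : ℤ) : Fin N) = 0 then 1 else 0 := by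
          rw [he0, XL_zpow_single XL hXL (d - c) 0, zero_add, hinner01]
  have hg_congr : ∀ c d : ℤ, ((c : ℤ) : Fin N) = ((d : ℤ) : Fin N) → g c = g d := by
    intro c d h
    have h0 : ((d - c : ℤ) : Fin N) = 0 := by
      push_cast
      rw [h]
      ring
    have h1 := hg_inner c d
    rw [if_pos h0] at h1
    exact (inner_eq_one_iff_of_norm_eq_one (hgnorm c) (hgnorm d)).mp h1
  -- orthonormal family indexed by Fin N
  set f : Fin N → H := fun j => g ((j : ℕ) : ℤ) with hf
  have hfj : ∀ j : Fin N, f j = g ((j : ℕ) : ℤ) := fun _ => rfl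
  have horth : Orthonormal ℂ f := by
    rw [orthonormal_iff_ite]
    intro i j
    rw [hfj, hfj, hg_inner]
    have key : ((((j : ℕ) : ℤ) - ((i : ℕ) : ℤ) : ℤ) : Fin N) = 0 ↔ i = j := by
      rw [Int.cast_sub, Int.cast_natCast, Int.cast_natCast, Fin.cast_val_eq_self,
        Fin.cast_val_eq_self, sub_eq_zero, eq_comm]
    simp only [key]
  -- construct the isometry
  set B := EuclideanSpace.basisFun (Fin N) ℂ with hB
  set T : EuclideanSpace ℂ (Fin N) →ₗ[ℂ] H := B.toBasis.constr ℂ f with hT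
  have hTe : ∀ j : Fin N, T (EuclideanSpace.single j 1) = f j := by
    intro j
    have h1 := B.toBasis.constr_basis ℂ f j
    rw [show B.toBasis j = EuclideanSpace.single j 1 by
      rw [OrthonormalBasis.coe_toBasis, hB, EuclideanSpace.basisFun_apply]] at h1
    exact h1
  have hBon : Orthonormal ℂ (⇑B.toBasis) := by
    rw [OrthonormalBasis.coe_toBasis]
    exact B.orthonormal
  have hTon : Orthonormal ℂ (T ∘ ⇑B.toBasis) := by
    have h1 : (T ∘ ⇑B.toBasis) = f := by
      funext j
      simp only [Function.comp_apply]
      rw [OrthonormalBasis.coe_toBasis, hB, EuclideanSpace.basisFun_apply]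
      exact hTe j
    rw [h1]
    exact horth
  set V : EuclideanSpace ℂ (Fin N) →ₗᵢ[ℂ] H := T.isometryOfOrthonormal hBon hTon with hV
  have hVapp : ∀ x, V x = T x := fun x => rfl
  have hVe : ∀ j : Fin N, V (EuclideanSpace.single j 1) = f j := by
    intro j
    rw [hVapp, hTe]
  -- physical Z action on the frame
  have hXg : ∀ a c : ℤ, ((XP ^ a : unitary (H →L[ℂ] H)) : H →L[ℂ] H) (g c) = g (a + c) := by
    intro a c
    rw [hgc, hgc, ← unitary_coe_mul_apply, ← zpow_add]
  have hZg : ∀ (b : ℤ) (j : Fin N),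
      ((ZP ^ b : unitary (H →L[ℂ] H)) : H →L[ℂ] H) (g ((j : ℕ) : ℤ))
        = Complex.exp (2 * Real.pi * Complex.I * (j : ℕ) / N * b) • g ((j : ℕ) : ℤ) := by
    intro b j
    set jv : ℤ := ((j : ℕ) : ℤ) with hjv
    set θ : ℂ := Complex.exp (2 * Real.pi * Complex.I * (j : ℕ) / N * b) with hθ
    have hexp : (2 * Real.pi * Complex.I * (j : ℕ) / N * b)
        = ((2 * Real.pi * (j : ℕ) * b / N : ℝ) : ℂ) * Complex.I := by
      push_cast
      ring
    have hθnorm : ‖θ‖ = 1 := by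
      rw [hθ, hexp, Complex.norm_exp_ofReal_mul_I]
    have hθconj : (starRingEnd ℂ) θ * θ = 1 := by
      rw [hθ, hexp, ← Complex.exp_conj, map_mul, Complex.conj_I, Complex.conj_ofReal,
        ← Complex.exp_add]
      ring_nf
      exact Complex.exp_zero
    -- the correlator
    have hc2 := hcorr [(-jv, b), (jv, 0)]
    simp only [List.map_cons, List.map_nil, List.prod_cons, List.prod_nil, zpow_zero,
      mul_one] at hc2
    have hphys : (inner ℂ (g jv) (((ZP ^ b : unitary (H →L[ℂ] H)) : H →L[ℂ] H) (g jv)) : ℂ)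
        = inner ℂ ω₀ ((((XP ^ (-jv) * ZP ^ b) * XP ^ jv : unitary (H →L[ℂ] H)) :
            H →L[ℂ] H) ω₀) := by
      rw [hgc jv, unitary_inner_left (XP ^ jv)]
      rw [← zpow_neg]
      rw [unitary_coe_mul_apply, unitary_coe_mul_apply]
    have hlog : (inner ℂ e0 ((((XL ^ (-jv) * ZL ^ b) * XL ^ jv : unitary _) :
        EuclideanSpace ℂ (Fin N) →L[ℂ] EuclideanSpace ℂ (Fin N)) e0) : ℂ) = θ := by
      rw [unitary_coe_mul_apply, unitary_coe_mul_apply, he0]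
      rw [XL_zpow_single XL hXL jv 0, zero_add]
      have hjcast : ((jv : ℤ) : Fin N) = j := by
        rw [hjv, Int.cast_natCast, Fin.cast_val_eq_self]
      rw [hjcast]
      rw [ZL_zpow_single ZL hZL b j, map_smul]
      rw [XL_zpow_single XL hXL (-jv) j]
      have hneg : (j + ((-jv : ℤ) : Fin N)) = 0 := by
        rw [Int.cast_neg, hjcast]
        ring
      rw [hneg, inner_smul_right, ← he0, hinner01, if_pos rfl, mul_one, hθ]
    have hvu : (inner ℂ (θ • g jv) (((ZP ^ b : unitary (H →L[ℂ] H)) : H →L[ℂ] H) (g jv)) : ℂ)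
        = 1 := by
      rw [inner_smul_left, hphys, hc2, hlog, hθconj]
    have hnv : ‖θ • g jv‖ = 1 := by
      rw [norm_smul, hθnorm, hgnorm, one_mul]
    have hnu : ‖((ZP ^ b : unitary (H →L[ℂ] H)) : H →L[ℂ] H) (g jv)‖ = 1 :=
      (Unitary.norm_map _ _).trans (hgnorm jv)
    exact ((inner_eq_one_iff_of_norm_eq_one hnv hnu).mp hvu).symm
  -- intertwining on basis vectors
  have hbasis : ∀ (a b : ℤ) (j : Fin N),
      ((XP ^ a * ZP ^ b : unitary (H →L[ℂ] H)) : H →L[ℂ] H) (V (EuclideanSpace.single j 1))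
        = V (((XL ^ a * ZL ^ b : unitary _) :
            EuclideanSpace ℂ (Fin N) →L[ℂ] EuclideanSpace ℂ (Fin N))
              (EuclideanSpace.single j 1)) := by
    intro a b j
    rw [unitary_coe_mul_apply, unitary_coe_mul_apply]
    rw [hVe j, hfj j]
    rw [hZg b j, map_smul, hXg a ((j : ℕ) : ℤ)]
    rw [ZL_zpow_single ZL hZL b j, map_smul, XL_zpow_single XL hXL a j,
      V.map_smul, hVe (j + (a : Fin N)), hfj (j + (a : Fin N))]
    congr 1
    apply hg_congr
    push_cast [Fin.cast_val_eq_self]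
    ring
  -- intertwining as continuous linear maps
  have hmap : ∀ a b : ℤ,
      ((XP ^ a * ZP ^ b : unitary (H →L[ℂ] H)) : H →L[ℂ] H).comp V.toContinuousLinearMap
        = V.toContinuousLinearMap.comp
            ((XL ^ a * ZL ^ b : unitary _) :
              EuclideanSpace ℂ (Fin N) →L[ℂ] EuclideanSpace ℂ (Fin N)) := by
    intro a b
    apply ContinuousLinearMap.coe_injective
    apply B.toBasis.ext
    intro j
    have hBj : B.toBasis j = EuclideanSpace.single j 1 := by
      rw [OrthonormalBasis.coe_toBasis, hB, EuclideanSpace.basisFun_apply]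
    simp only [ContinuousLinearMap.coe_comp, LinearMap.coe_comp, Function.comp_apply,
      ContinuousLinearMap.coe_coe, hBj]
    rw [LinearIsometry.coe_toContinuousLinearMap]
    exact hbasis a b j
  have hpoint : ∀ (a b : ℤ) (x : EuclideanSpace ℂ (Fin N)),
      ((XP ^ a * ZP ^ b : unitary (H →L[ℂ] H)) : H →L[ℂ] H) (V x)
        = V (((XL ^ a * ZL ^ b : unitary _) :
            EuclideanSpace ℂ (Fin N) →L[ℂ] EuclideanSpace ℂ (Fin N)) x) := by
    intro a b x
    have h1 := ContinuousLinearMap.ext_iff.mp (hmap a b) x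
    simpa using h1
  refine ⟨V, hpoint, ?_⟩
  intro a b
  set W := V.toContinuousLinearMap with hW
  set U : H →L[ℂ] H := ((XP ^ a * ZP ^ b : unitary (H →L[ℂ] H)) : H →L[ℂ] H) with hU
  set L : EuclideanSpace ℂ (Fin N) →L[ℂ] EuclideanSpace ℂ (Fin N) :=
    ((XL ^ a * ZL ^ b : unitary _) :
      EuclideanSpace ℂ (Fin N) →L[ℂ] EuclideanSpace ℂ (Fin N)) with hL
  have hUW : U.comp W = W.comp L := hmap a b
  -- intertwining for the inverse
  have hinvP : (XP ^ a * ZP ^ b : unitary (H →L[ℂ] H))⁻¹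
      = (XP ^ (0:ℤ) * ZP ^ (-b)) * (XP ^ (-a) * ZP ^ (0:ℤ)) := by
    rw [mul_inv_rev, ← zpow_neg, ← zpow_neg]
    simp
  have hinvL : (XL ^ a * ZL ^ b : unitary _)⁻¹
      = (XL ^ (0:ℤ) * ZL ^ (-b)) * (XL ^ (-a) * ZL ^ (0:ℤ)) := by
    rw [mul_inv_rev, ← zpow_neg, ← zpow_neg]
    simp
  have hmapinv : (((XP ^ a * ZP ^ b : unitary (H →L[ℂ] H))⁻¹ : unitary (H →L[ℂ] H)) :
      H →L[ℂ] H).comp W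
      = W.comp (((XL ^ a * ZL ^ b : unitary _)⁻¹ : unitary _) :
          EuclideanSpace ℂ (Fin N) →L[ℂ] EuclideanSpace ℂ (Fin N)) := by
    rw [hinvP, hinvL]
    have e1 : (((XP ^ (0:ℤ) * ZP ^ (-b)) * (XP ^ (-a) * ZP ^ (0:ℤ)) :
        unitary (H →L[ℂ] H)) : H →L[ℂ] H)
        = ((XP ^ (0:ℤ) * ZP ^ (-b) : unitary (H →L[ℂ] H)) : H →L[ℂ] H)
            ∘L ((XP ^ (-a) * ZP ^ (0:ℤ) : unitary (H →L[ℂ] H)) : H →L[ℂ] H) := rfl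
    have e2 : (((XL ^ (0:ℤ) * ZL ^ (-b)) * (XL ^ (-a) * ZL ^ (0:ℤ)) :
        unitary (EuclideanSpace ℂ (Fin N) →L[ℂ] EuclideanSpace ℂ (Fin N))) :
          EuclideanSpace ℂ (Fin N) →L[ℂ] EuclideanSpace ℂ (Fin N))
        = ((XL ^ (0:ℤ) * ZL ^ (-b) : unitary _) :
            EuclideanSpace ℂ (Fin N) →L[ℂ] EuclideanSpace ℂ (Fin N))
            ∘L ((XL ^ (-a) * ZL ^ (0:ℤ) : unitary _) :
              EuclideanSpace ℂ (Fin N) →L[ℂ] EuclideanSpace ℂ (Fin N)) := rfl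
    rw [e1, e2, ContinuousLinearMap.comp_assoc, hmap (-a) 0,
      ← ContinuousLinearMap.comp_assoc, hmap 0 (-b), ContinuousLinearMap.comp_assoc]
  -- take adjoints
  have hadj : (ContinuousLinearMap.adjoint W).comp U = L.comp (ContinuousLinearMap.adjoint W) := by
    have h2 := congrArg ContinuousLinearMap.adjoint hmapinv
    rw [ContinuousLinearMap.adjoint_comp, ContinuousLinearMap.adjoint_comp] at h2
    rw [adjoint_unitary_inv, adjoint_unitary_inv] at h2
    rw [← hU, ← hL] at h2
    exact h2
  show U * (W ∘L ContinuousLinearMap.adjoint W) = (W ∘L ContinuousLinearMap.adjoint W) * U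
  rw [ContinuousLinearMap.mul_def, ContinuousLinearMap.mul_def]
  calc U ∘L (W ∘L ContinuousLinearMap.adjoint W)
      = (U ∘L W) ∘L ContinuousLinearMap.adjoint W := by
        rw [ContinuousLinearMap.comp_assoc]
    _ = (W ∘L L) ∘L ContinuousLinearMap.adjoint W := by rw [hUW]
    _ = W ∘L (L ∘L ContinuousLinearMap.adjoint W) := by
        rw [ContinuousLinearMap.comp_assoc]
    _ = W ∘L (ContinuousLinearMap.adjoint W ∘L U) := by rw [hadj]
    _ = (W ∘L ContinuousLinearMap.adjoint W) ∘L U := by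
        rw [ContinuousLinearMap.comp_assoc]
end

section
/- Let H and K be finite-dimensional complex inner product spaces, let O : H → H be a linear operator, and let V : K → H be any linear map. Then there exists a unitary operator U on H such that ‖(U − O) ∘ V‖ ≤ ‖(O† ∘ O − id_H) ∘ V‖, where ‖·‖ denotes the operator norm. -/
open ContinuousLinearMap

open Module in
/-- Unitary reconstruction: for any operator `O` and any map `V`, there is a
unitary `U` with `‖(U − O) ∘ V‖ ≤ ‖(O†O − 1) ∘ V‖`. -/
theorem exists_unitary_close_on_range
    (H K : Type*) [NormedAddCommGroup H] [InnerProductSpace ℂ H] [FiniteDimensional ℂ H]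
    [NormedAddCommGroup K] [InnerProductSpace ℂ K] [FiniteDimensional ℂ K]
    (O : H →L[ℂ] H) (V : K →L[ℂ] H) :
    ∃ U : H →L[ℂ] H, U ∈ unitary (H →L[ℂ] H) ∧
      ‖(U - O) ∘L V‖ ≤ ‖(adjoint O ∘L O - ContinuousLinearMap.id ℂ H) ∘L V‖ := by
  classical
  set A : H →L[ℂ] H := adjoint O ∘L O with hA
  have hAsa : IsSelfAdjoint A := by
    rw [IsSelfAdjoint, star_eq_adjoint, hA, adjoint_comp, adjoint_adjoint]
  have hsym : (A : H →ₗ[ℂ] H).IsSymmetric :=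
    ContinuousLinearMap.isSelfAdjoint_iff_isSymmetric.mp hAsa
  have hn : finrank ℂ H = finrank ℂ H := rfl
  set b := hsym.eigenvectorBasis hn with hbdef
  set μ : Fin (finrank ℂ H) → ℝ := hsym.eigenvalues hn with hμdef
  have hb : ∀ i, A (b i) = (μ i : ℂ) • b i := fun i => hsym.apply_eigenvectorBasis hn i
  have hmu : ∀ i, μ i = ‖O (b i)‖ ^ 2 := by
    intro i
    have h1 : (inner ℂ (b i) (A (b i)) : ℂ) = (μ i : ℂ) := by
      rw [hb i, inner_smul_right, inner_self_eq_norm_sq_to_K]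
      simp [b.orthonormal.1 i]
    have h2 : (inner ℂ (b i) (A (b i)) : ℂ) = (‖O (b i)‖ ^ 2 : ℝ) := by
      rw [hA]
      simp only [ContinuousLinearMap.comp_apply, ContinuousLinearMap.adjoint_inner_right]
      rw [inner_self_eq_norm_sq_to_K]
      norm_cast
    have := h1.symm.trans h2
    exact_mod_cast this
  have hmu0 : ∀ i, 0 ≤ μ i := fun i => (hmu i) ▸ sq_nonneg _
  set lam : Fin (finrank ℂ H) → ℝ := fun i => Real.sqrt (μ i) with hlam
  have hlam0 : ∀ i, 0 ≤ lam i := fun i => Real.sqrt_nonneg _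
  have hlamsq : ∀ i, lam i ^ 2 = μ i := fun i => Real.sq_sqrt (hmu0 i)
  have hlamnorm : ∀ i, lam i = ‖O (b i)‖ := by
    intro i
    show Real.sqrt (μ i) = _
    rw [hmu i, Real.sqrt_sq (norm_nonneg _)]
  set s : Set (Fin (finrank ℂ H)) := {i | lam i ≠ 0} with hs
  set w : Fin (finrank ℂ H) → H := fun i => ((lam i : ℂ))⁻¹ • O (b i) with hw
  have hOb : ∀ i j, (inner ℂ (O (b i)) (O (b j)) : ℂ) =
      if i = j then ((μ i : ℝ) : ℂ) else 0 := by
    intro i j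
    rw [← ContinuousLinearMap.adjoint_inner_right]
    have : adjoint O (O (b j)) = A (b j) := rfl
    rw [this, hb j, inner_smul_right]
    rcases eq_or_ne i j with rfl | hij
    · simp [orthonormal_iff_ite.mp b.orthonormal i i]
    · simp [orthonormal_iff_ite.mp b.orthonormal i j, hij]
  have hwo : Orthonormal ℂ (s.restrict w) := by
    rw [orthonormal_iff_ite]
    rintro ⟨i, hi⟩ ⟨j, hj⟩
    simp only [Set.restrict, Set.restrict_apply, hw]
    rw [inner_smul_left, inner_smul_right, hOb i j]
    rcases eq_or_ne i j with rfl | hij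
    · have hli : lam i ≠ 0 := hi
      simp only [if_pos rfl, Subtype.ext_iff]
      have hlic : ((lam i : ℝ) : ℂ) ≠ 0 := by exact_mod_cast hli
      rw [← Complex.ofReal_inv, Complex.conj_ofReal, ← hlamsq i]
      push_cast
      field_simp
    · simp [hij, Subtype.ext_iff]
  obtain ⟨c, hc⟩ := hwo.exists_orthonormalBasis_extension_of_card_eq (by simp)
  -- key: O (b i) = lam i • c i for all i
  have hkey : ∀ i, O (b i) = ((lam i : ℝ) : ℂ) • c i := by
    intro i
    by_cases hi : lam i ≠ 0
    · rw [hc i hi, hw]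
      simp only [smul_smul]
      rw [← Complex.ofReal_inv, ← Complex.ofReal_mul, mul_inv_cancel₀ hi]
      simp
    · push_neg at hi
      have : ‖O (b i)‖ = 0 := by rw [← hlamnorm i, hi]
      rw [norm_eq_zero] at this
      rw [this, hi]
      simp
  -- the unitary
  set e : H ≃ₗᵢ[ℂ] H := b.repr.trans c.repr.symm with he
  set U : H →L[ℂ] H := (e : H →L[ℂ] H) with hU
  refine ⟨U, (Unitary.linearIsometryEquiv.symm e).property, ?_⟩
  -- action of U on b
  have hUb : ∀ i, U (b i) = c i := by
    intro i
    show e (b i) = c i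
    rw [he]
    simp [LinearIsometryEquiv.trans_apply]
  -- pointwise inequality
  have hUOb : ∀ j, (U - O) (b j) = (1 - (lam j : ℂ)) • c j := by
    intro j
    rw [ContinuousLinearMap.sub_apply, hUb j, hkey j, sub_smul, one_smul]
  have hpoint : ∀ x : H, ‖(U - O) x‖ ≤ ‖(A - ContinuousLinearMap.id ℂ H) x‖ := by
    intro x
    have hrepr1 : ∀ i, c.repr ((U - O) x) i = (1 - (lam i : ℂ)) * b.repr x i := by
      intro i
      have hx2 : (U - O) x = ∑ j, ((1 - (lam j : ℂ)) * b.repr x j) • c j := by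
        conv_lhs => rw [← b.sum_repr x]
        rw [map_sum]
        refine Finset.sum_congr rfl fun j _ => ?_
        rw [map_smul, hUOb j, smul_smul, mul_comm]
      rw [hx2, c.repr_apply_apply, inner_sum]
      simp_rw [inner_smul_right, orthonormal_iff_ite.mp c.orthonormal i]
      rw [Finset.sum_eq_single i]
      · simp
      · intro j _ hj
        simp [Ne.symm hj]
      · simp
    have hrepr2 : ∀ i, b.repr ((A - ContinuousLinearMap.id ℂ H) x) i
        = ((μ i : ℂ) - 1) * b.repr x i := by
      intro i
      rw [b.repr_apply_apply, b.repr_apply_apply]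
      rw [ContinuousLinearMap.sub_apply, inner_sub_right]
      have hsy : (inner ℂ (b i) (A x) : ℂ) = inner ℂ (A (b i)) x := (hsym (b i) x).symm
      have : (inner ℂ (b i) (A x) : ℂ) = (μ i : ℂ) * inner ℂ (b i) x := by
        rw [hsy, hb i, inner_smul_left, Complex.conj_ofReal]
      rw [this]
      simp [ContinuousLinearMap.id_apply]
      ring
    rw [← c.repr.norm_map ((U - O) x), ← b.repr.norm_map ((A - ContinuousLinearMap.id ℂ H) x)]
    rw [EuclideanSpace.norm_eq, EuclideanSpace.norm_eq]
    apply Real.sqrt_le_sqrt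
    apply Finset.sum_le_sum
    intro i _
    rw [hrepr1 i, hrepr2 i, norm_mul, norm_mul, mul_pow, mul_pow]
    apply mul_le_mul_of_nonneg_right _ (sq_nonneg _)
    have h1 : (1 : ℂ) - (lam i : ℂ) = ((1 - lam i : ℝ) : ℂ) := by push_cast; ring
    have h2 : ((μ i : ℂ)) - 1 = ((μ i - 1 : ℝ) : ℂ) := by push_cast; ring
    rw [h1, h2, Complex.norm_real, Complex.norm_real]
    have key : |1 - lam i| ≤ |μ i - 1| := by
      have hfac : μ i - 1 = (lam i - 1) * (lam i + 1) := by rw [← hlamsq i]; ring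
      rw [hfac, abs_mul, abs_sub_comm 1 (lam i)]
      rw [abs_of_nonneg (by linarith [hlam0 i] : (0:ℝ) ≤ lam i + 1)]
      exact le_mul_of_one_le_right (abs_nonneg _) (by linarith [hlam0 i])
    exact pow_le_pow_left₀ (abs_nonneg _) key 2
  -- conclude
  refine ContinuousLinearMap.opNorm_le_bound _ (norm_nonneg _) fun k => ?_
  calc ‖((U - O) ∘L V) k‖ = ‖(U - O) (V k)‖ := rfl
    _ ≤ ‖(A - ContinuousLinearMap.id ℂ H) (V k)‖ := hpoint (V k)
    _ = ‖((A - ContinuousLinearMap.id ℂ H) ∘L V) k‖ := rfl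
    _ ≤ ‖(A - ContinuousLinearMap.id ℂ H) ∘L V‖ * ‖k‖ := le_opNorm _ _
end

section
/- Let H and K be finite-dimensional complex inner product spaces and let V : K → H be a linear map such that ‖V† ∘ V − id_K‖ ≤ η for some 0 ≤ η < 1 (operator norm). Then V† ∘ V is positive definite, the map Ṽ := V ∘ (V† ∘ V)^{-1/2} is a well-defined linear isometry from K to H, and ‖V − Ṽ‖ ≤ η. -/
open ContinuousLinearMap Pointwise

lemma sqrt_abs_sub_one_le {t η : ℝ} (hη : 0 ≤ η) (hη1 : η < 1) (ht : |t - 1| ≤ η) :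
    |Real.sqrt t - 1| ≤ η := by
  obtain ⟨ht1, ht2⟩ := abs_le.mp ht
  have h0 : 0 ≤ t := by linarith
  have hr : Real.sqrt t ^ 2 = t := Real.sq_sqrt h0
  have hrn : 0 ≤ Real.sqrt t := Real.sqrt_nonneg t
  rw [abs_le]
  constructor
  · nlinarith [sq_nonneg (Real.sqrt t - 1), sq_nonneg (Real.sqrt t + 1 - η)]
  · nlinarith [sq_nonneg (Real.sqrt t - 1), sq_nonneg (Real.sqrt t + 1 + η)]

set_option synthInstance.maxHeartbeats 1000000 in
set_option maxHeartbeats 1000000 in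
/-- If `‖V†V − 1‖ ≤ η < 1` then `V†V` is positive definite and
`Ṽ := V (V†V)^{-1/2}` is a well-defined linear isometry with `‖V − Ṽ‖ ≤ η`. -/
theorem approx_isometry_polar_correction
    (K H : Type*) [NormedAddCommGroup K] [InnerProductSpace ℂ K] [FiniteDimensional ℂ K]
    [NormedAddCommGroup H] [InnerProductSpace ℂ H] [FiniteDimensional ℂ H]
    (V : K →L[ℂ] H) (η : ℝ) (hη : 0 ≤ η) (hη1 : η < 1)
    (h : ‖adjoint V ∘L V - ContinuousLinearMap.id ℂ K‖ ≤ η) :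
    (adjoint V ∘L V).IsPositive ∧
    (∀ x : K, x ≠ 0 → 0 < (inner ℂ x ((adjoint V ∘L V) x) : ℂ).re) ∧
    ∃ W : K →ₗᵢ[ℂ] H,
      W.toContinuousLinearMap ∘L CFC.sqrt (adjoint V ∘L V) = V ∧
      ‖V - W.toContinuousLinearMap‖ ≤ η := by
  set a := adjoint V ∘L V with ha_def
  have hid : (ContinuousLinearMap.id ℂ K) = (1 : K →L[ℂ] K) := rfl
  rw [hid] at h
  have hpos : a.IsPositive := by simpa using! (isPositive_one (E := H)).adjoint_conj V
  have ha : (0 : K →L[ℂ] K) ≤ a := (nonneg_iff_isPositive a).mpr hpos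
  rcases subsingleton_or_nontrivial K with hK | hK
  · -- trivial case
    refine ⟨hpos, fun x hx => absurd (Subsingleton.elim x 0) hx,
      ⟨(0 : K →ₗ[ℂ] H), fun x => by rw [Subsingleton.elim x 0]; simp⟩, ?_, ?_⟩
    · ext x
      have : x = 0 := Subsingleton.elim x 0
      simp [this]
    · have : V = 0 := by ext x; have : x = 0 := Subsingleton.elim x 0; simp [this]
      simpa [this] using hη
  -- spectrum bound
  have hspec : ∀ t ∈ spectrum ℝ a, |t - 1| ≤ η := by
    intro t ht
    have h1 : t - 1 ∈ spectrum ℝ a - {(1 : ℝ)} := Set.sub_mem_sub ht rfl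
    rw [spectrum.sub_singleton_eq, map_one] at h1
    exact (spectrum.norm_le_norm_of_mem h1).trans h
  -- positive definiteness
  have hdef : ∀ x : K, x ≠ 0 → 0 < (inner ℂ x (a x) : ℂ).re := by
    intro x hx
    have h1 : (inner ℂ x (a x) : ℂ) = inner ℂ x x + inner ℂ x ((a - 1) x) := by
      rw [← inner_add_right]; congr 1; simp
    have h2 : ‖(inner ℂ x ((a - 1) x) : ℂ)‖ ≤ η * ‖x‖ ^ 2 :=
      calc ‖(inner ℂ x ((a - 1) x) : ℂ)‖ ≤ ‖x‖ * ‖(a - 1) x‖ := norm_inner_le_norm _ _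
        _ ≤ ‖x‖ * (‖a - 1‖ * ‖x‖) := by gcongr; exact le_opNorm _ _
        _ ≤ ‖x‖ * (η * ‖x‖) := by gcongr
        _ = η * ‖x‖ ^ 2 := by ring
    have h3 : |(inner ℂ x ((a - 1) x) : ℂ).re| ≤ η * ‖x‖ ^ 2 :=
      (Complex.abs_re_le_norm _).trans h2
    have h4 : (inner ℂ x x : ℂ).re = ‖x‖ ^ 2 := by
      simpa using @inner_self_eq_norm_sq ℂ _ _ _ _ x
    have hx2 : 0 < ‖x‖ ^ 2 := pow_pos (norm_pos_iff.mpr hx) 2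
    rw [h1, Complex.add_re, h4]
    nlinarith [abs_le.mp h3]
  refine ⟨hpos, hdef, ?_⟩
  -- the square root
  set s := CFC.sqrt a with hs_def
  have hss : s * s = a := CFC.sqrt_mul_sqrt_self a ha
  have hs_nonneg : (0 : K →L[ℂ] K) ≤ s := CFC.sqrt_nonneg a
  have hs_sa : IsSelfAdjoint s := ((nonneg_iff_isPositive s).mp hs_nonneg).isSelfAdjoint
  -- a is a unit
  have haU : IsUnit a := by
    rw [← spectrum.zero_notMem_iff ℝ]
    intro h0
    have := hspec 0 h0
    rw [zero_sub, abs_neg, abs_one] at this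
    linarith
  -- s is a unit
  have hsU : IsUnit s := by
    obtain ⟨v, hv⟩ := haU
    have hcomm : Commute s (↑v : K →L[ℂ] K) := by
      rw [hv, ← hss]; exact (Commute.refl s).mul_right (Commute.refl s)
    refine ⟨⟨s, s * ↑v⁻¹, ?_, ?_⟩, rfl⟩
    · rw [← mul_assoc, hss, ← hv, Units.mul_inv]
    · rw [mul_assoc, ← (hcomm.units_inv_right).eq, ← mul_assoc, hss, ← hv, Units.mul_inv]
  obtain ⟨u, hu⟩ := hsU
  -- the isometry
  set Wl : K →L[ℂ] H := V ∘L ↑u⁻¹ with hWl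
  have hinv : ∀ x : K, (↑u⁻¹ : K →L[ℂ] K) (s x) = x := by
    intro x
    have h1 : ((↑u⁻¹ * ↑u : K →L[ℂ] K)) x = x := by rw [Units.inv_mul]; rfl
    rw [hu] at h1
    simpa [mul_apply] using h1
  have hinv' : ∀ x : K, s ((↑u⁻¹ : K →L[ℂ] K) x) = x := by
    intro x
    have h1 : ((↑u * ↑u⁻¹ : K →L[ℂ] K)) x = x := by rw [Units.mul_inv]; rfl
    rw [hu] at h1
    simpa [mul_apply] using h1
  have hWinner : ∀ x : K, (inner ℂ (Wl x) (Wl x) : ℂ) = inner ℂ x x := by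
    intro x
    set y := (↑u⁻¹ : K →L[ℂ] K) x with hy
    have h1 : (inner ℂ (V y) (V y) : ℂ) = inner ℂ y (a y) :=
      (adjoint_inner_right V y (V y)).symm
    have h2 : a y = s (s y) := by rw [← hss]; rfl
    have h5 : (inner ℂ y (s (s y)) : ℂ) = inner ℂ (s y) (s y) := by
      rw [← adjoint_inner_left s (s y) y, hs_sa.adjoint_eq]
    calc (inner ℂ (Wl x) (Wl x) : ℂ) = inner ℂ (V y) (V y) := rfl
      _ = inner ℂ y (s (s y)) := by rw [h1, h2]
      _ = inner ℂ (s y) (s y) := h5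
      _ = inner ℂ x x := by rw [hy, hinv']
  have hWnorm : ∀ x : K, ‖Wl x‖ = ‖x‖ := by
    intro x
    have h1 := hWinner x
    rw [inner_self_eq_norm_sq_to_K (𝕜 := ℂ), inner_self_eq_norm_sq_to_K (𝕜 := ℂ)] at h1
    have h2 : ‖Wl x‖ ^ 2 = ‖x‖ ^ 2 := by exact_mod_cast h1
    have h3 := congrArg Real.sqrt h2
    rwa [Real.sqrt_sq (norm_nonneg _), Real.sqrt_sq (norm_nonneg _)] at h3
  refine ⟨⟨Wl.toLinearMap, hWnorm⟩, ?_, ?_⟩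
  · ext x
    show Wl (s x) = V x
    rw [hWl]
    show V ((↑u⁻¹ : K →L[ℂ] K) (s x)) = V x
    rw [hinv]
  · have hWeq : (LinearIsometry.mk Wl.toLinearMap hWnorm).toContinuousLinearMap = Wl := by
      ext x; rfl
    rw [hWeq]
    -- V - Wl = Wl ∘L (s - 1)
    have hVW : V - Wl = Wl ∘L (s - 1) := by
      ext x
      simp only [sub_apply, comp_apply, ContinuousLinearMap.sub_apply, one_apply]
      rw [map_sub]
      congr 1
      rw [hWl]
      show V x = V ((↑u⁻¹ : K →L[ℂ] K) (s x))
      rw [hinv]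
    rw [hVW]
    have hWle : ‖Wl‖ ≤ 1 := by
      refine opNorm_le_bound Wl zero_le_one fun x => ?_
      rw [hWnorm, one_mul]
    have hs1 : ‖s - 1‖ ≤ η := by
      have hcfc : s = cfc (fun t : ℝ => Real.sqrt t) a := by
        rw [hs_def, CFC.sqrt_eq_cfc, cfc_nnreal_eq_real (a := a)]
        congr 1
        funext t; rw [Real.sqrt]
      have h1cfc : (1 : K →L[ℂ] K) = cfc (fun _ : ℝ => (1 : ℝ)) a := by
        rw [cfc_const 1 a, map_one]
      rw [hcfc, h1cfc, ← cfc_sub _ _ a]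
      refine norm_cfc_le hη fun t ht => ?_
      rw [Real.norm_eq_abs]
      exact sqrt_abs_sub_one_le hη hη1 (hspec t ht)
    calc ‖Wl ∘L (s - 1)‖ ≤ ‖Wl‖ * ‖s - 1‖ := opNorm_comp_le _ _
      _ ≤ 1 * η := mul_le_mul hWle hs1 (norm_nonneg _) zero_le_one
      _ = η := one_mul η
end

section
/- Let H and K be complex inner product spaces, let V : K → H be a linear map, let O_L be a linear operator on K and O_P a linear operator on H, and let η ≥ 0. Suppose that for every unit vector ψ ∈ K: (i) ‖V(O_L ψ)‖² ≤ ‖O_L ψ‖² + η, (ii) ‖O_P(Vψ)‖² ≤ ‖O_L ψ‖² + η, and (iii) Re⟪O_P(Vψ), V(O_L ψ)⟫ ≥ ‖O_L ψ‖² − η. Then ‖V ∘ O_L − O_P ∘ V‖ ≤ 2√η in operator norm. -/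
/-- Quantitative core of the approximate-reconstruction lemma: three quadratic
estimates imply that the physical operator `O_P` approximately intertwines with
the encoding map `V`, with error `2√η`. -/
theorem approx_intertwining_of_quadratic_estimates
    (K H : Type*) [NormedAddCommGroup K] [InnerProductSpace ℂ K]
    [NormedAddCommGroup H] [InnerProductSpace ℂ H]
    (V : K →L[ℂ] H) (OL : K →L[ℂ] K) (OP : H →L[ℂ] H) (η : ℝ) (hη : 0 ≤ η)
    (h1 : ∀ ψ : K, ‖ψ‖ = 1 → ‖V (OL ψ)‖ ^ 2 ≤ ‖OL ψ‖ ^ 2 + η)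
    (h2 : ∀ ψ : K, ‖ψ‖ = 1 → ‖OP (V ψ)‖ ^ 2 ≤ ‖OL ψ‖ ^ 2 + η)
    (h3 : ∀ ψ : K, ‖ψ‖ = 1 → ‖OL ψ‖ ^ 2 - η ≤ (inner ℂ (OP (V ψ)) (V (OL ψ)) : ℂ).re) :
    ‖V ∘L OL - OP ∘L V‖ ≤ 2 * Real.sqrt η := by
  have hb : 0 ≤ 2 * Real.sqrt η := by positivity
  -- key estimate on unit vectors
  have key : ∀ ψ : K, ‖ψ‖ = 1 → ‖(V ∘L OL - OP ∘L V) ψ‖ ≤ 2 * Real.sqrt η := by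
    intro ψ hψ
    have hx : ‖OP (V ψ) - V (OL ψ)‖ ^ 2 ≤ 4 * η := by
      have := @norm_sub_sq ℂ _ _ _ _ (OP (V ψ)) (V (OL ψ))
      have h1' := h1 ψ hψ
      have h2' := h2 ψ hψ
      have h3' := h3 ψ hψ
      have h3'' : ‖OL ψ‖ ^ 2 - η ≤ RCLike.re (inner ℂ (OP (V ψ)) (V (OL ψ)) : ℂ) := h3'
      rw [this]
      nlinarith [h1', h2', h3'']
    have hx' : ‖OP (V ψ) - V (OL ψ)‖ ≤ 2 * Real.sqrt η := by
      nlinarith [hx, Real.sq_sqrt hη, Real.sqrt_nonneg η,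
        norm_nonneg (OP (V ψ) - V (OL ψ)),
        sq_nonneg (‖OP (V ψ) - V (OL ψ)‖ - 2 * Real.sqrt η)]
    calc ‖(V ∘L OL - OP ∘L V) ψ‖ = ‖V (OL ψ) - OP (V ψ)‖ := rfl
      _ = ‖OP (V ψ) - V (OL ψ)‖ := by rw [norm_sub_rev]
      _ ≤ 2 * Real.sqrt η := hx'
  refine ContinuousLinearMap.opNorm_le_bound _ hb ?_
  intro ψ
  rcases eq_or_ne ψ 0 with rfl | hψ0
  · simp
  · have hn : ‖ψ‖ ≠ 0 := norm_ne_zero_iff.mpr hψ0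
    have hunit : ‖(‖ψ‖⁻¹ : ℂ) • ψ‖ = 1 := by
      simp [norm_smul, inv_mul_cancel₀ hn]
    have := key _ hunit
    rw [map_smul, norm_smul] at this
    simp only [norm_inv, Complex.norm_real] at this
    have h2 : ‖(V ∘L OL - OP ∘L V) ψ‖ ≤ (2 * Real.sqrt η) * ‖ψ‖ := by
      have hpos : 0 < ‖ψ‖ := lt_of_le_of_ne (norm_nonneg _) (Ne.symm hn)
      calc ‖(V ∘L OL - OP ∘L V) ψ‖
          = ‖ψ‖ * (‖ψ‖⁻¹ * ‖(V ∘L OL - OP ∘L V) ψ‖) := by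
            field_simp
        _ ≤ ‖ψ‖ * (2 * Real.sqrt η) := by
            apply mul_le_mul_of_nonneg_left _ (le_of_lt hpos)
            calc ‖ψ‖⁻¹ * ‖(V ∘L OL - OP ∘L V) ψ‖
                = ‖(↑‖ψ‖ : ℂ)‖⁻¹ * ‖(V ∘L OL - OP ∘L V) ψ‖ := by
                  simp
              _ ≤ 2 * Real.sqrt η := by
                  simpa [norm_smul] using this
        _ = (2 * Real.sqrt η) * ‖ψ‖ := mul_comm _ _
    exact h2
end

section
/- Let H and K be complex inner product spaces, V : K → H a bounded linear map with ‖V‖ ≤ C, let O be a linear operator on K and P a linear operator on H, and let ε ≥ 0. Suppose ‖V ∘ O − P ∘ V‖ ≤ ε and ‖V ∘ O† − P† ∘ V‖ ≤ ε. Then the commutator of P with V ∘ V† satisfies ‖P ∘ (V ∘ V†) − (V ∘ V†) ∘ P‖ ≤ 2Cε. -/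
open ContinuousLinearMap

/-- An operator that approximately implements a logical operator (and whose
adjoint approximately implements the adjoint logical operator) approximately
commutes with the code-space projector `V ∘ V†`. -/
theorem approx_commutes_with_codespace_projector
    (K H : Type*) [NormedAddCommGroup K] [InnerProductSpace ℂ K] [CompleteSpace K]
    [NormedAddCommGroup H] [InnerProductSpace ℂ H] [CompleteSpace H]
    (V : K →L[ℂ] H) (C : ℝ) (hV : ‖V‖ ≤ C)
    (O : K →L[ℂ] K) (P : H →L[ℂ] H) (ε : ℝ) (hε : 0 ≤ ε)
    (h1 : ‖V ∘L O - P ∘L V‖ ≤ ε)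
    (h2 : ‖V ∘L adjoint O - adjoint P ∘L V‖ ≤ ε) :
    ‖P ∘L (V ∘L adjoint V) - (V ∘L adjoint V) ∘L P‖ ≤ 2 * C * ε := by
  have hadj : adjoint (V ∘L adjoint O - adjoint P ∘L V)
      = O ∘L adjoint V - adjoint V ∘L P := by
    simp [map_sub, adjoint_comp, adjoint_adjoint]
  have key : P ∘L (V ∘L adjoint V) - (V ∘L adjoint V) ∘L P
      = (P ∘L V - V ∘L O) ∘L adjoint V
        + V ∘L adjoint (V ∘L adjoint O - adjoint P ∘L V) := by
    rw [hadj]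
    ext x
    simp [sub_comp, comp_sub, comp_assoc]
  rw [key]
  have h1' : ‖P ∘L V - V ∘L O‖ ≤ ε := by rwa [← norm_neg, neg_sub]
  have hVn : ‖adjoint V‖ ≤ C := by
    rwa [LinearIsometryEquiv.norm_map (adjoint : (K →L[ℂ] H) ≃ₗᵢ⋆[ℂ] _) V]
  have hC : (0:ℝ) ≤ C := le_trans (norm_nonneg V) hV
  calc ‖(P ∘L V - V ∘L O) ∘L adjoint V
        + V ∘L adjoint (V ∘L adjoint O - adjoint P ∘L V)‖
      ≤ ‖(P ∘L V - V ∘L O) ∘L adjoint V‖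
        + ‖V ∘L adjoint (V ∘L adjoint O - adjoint P ∘L V)‖ := norm_add_le _ _
    _ ≤ ε * C + C * ε := by
        gcongr
        · exact le_trans (opNorm_comp_le _ _) (mul_le_mul h1' hVn (norm_nonneg _) hε)
        · refine le_trans (opNorm_comp_le _ _) (mul_le_mul hV ?_ (norm_nonneg _) hC)
          rwa [LinearIsometryEquiv.norm_map (adjoint : (K →L[ℂ] H) ≃ₗᵢ⋆[ℂ] _)]
    _ = 2 * C * ε := by ring
end

section
/- Let A, B, C be normed vector spaces over ℂ and consider continuous linear maps ℰ, 𝒞₀ : A → B; 𝒰, 𝒱 : B → B; 𝒞_τ : C → B; 𝒰_L : A → C; and ℛ : B → C. Suppose ‖ℛ‖ ≤ 1, ‖𝒱‖ ≤ 1, ‖𝒞₀‖ ≤ 1, ‖𝒰_L‖ ≤ 1, and that ‖ℰ − 𝒞₀‖ ≤ ε_enc, ‖ℛ ∘ 𝒞_τ − id_C‖ ≤ ε_rec, ‖𝒰 ∘ 𝒞₀ − 𝒞_τ ∘ 𝒰_L‖ ≤ ε_dyn, and ‖𝒱 − 𝒰‖ ≤ ε_spread. Then ‖ℛ ∘ 𝒱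 ∘ ℰ − 𝒰_L‖ ≤ ε_enc + ε_rec + ε_dyn + ε_spread. -/
/-- Error-tracking bound for the extracted non-local computation protocol:
telescoping the encoding, spread, dynamical, and recovery errors. -/
theorem error_tracking_bound
    (A B C : Type*) [NormedAddCommGroup A] [NormedSpace ℂ A]
    [NormedAddCommGroup B] [NormedSpace ℂ B]
    [NormedAddCommGroup C] [NormedSpace ℂ C]
    (ℰ 𝒞₀ : A →L[ℂ] B) (𝒰 𝒱 : B →L[ℂ] B) (𝒞τ : C →L[ℂ] B)
    (𝒰L : A →L[ℂ] C) (ℛ : B →L[ℂ] C)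
    (εenc εrec εdyn εspread : ℝ)
    (hR : ‖ℛ‖ ≤ 1) (hV : ‖𝒱‖ ≤ 1) (hC0 : ‖𝒞₀‖ ≤ 1) (hUL : ‖𝒰L‖ ≤ 1)
    (henc : ‖ℰ - 𝒞₀‖ ≤ εenc)
    (hrec : ‖ℛ ∘L 𝒞τ - ContinuousLinearMap.id ℂ C‖ ≤ εrec)
    (hdyn : ‖𝒰 ∘L 𝒞₀ - 𝒞τ ∘L 𝒰L‖ ≤ εdyn)
    (hspread : ‖𝒱 - 𝒰‖ ≤ εspread) :
    ‖ℛ ∘L 𝒱 ∘L ℰ - 𝒰L‖ ≤ εenc + εrec + εdyn + εspread := by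
  have key : ℛ ∘L 𝒱 ∘L ℰ - 𝒰L =
      (ℛ ∘L 𝒱) ∘L (ℰ - 𝒞₀) + (ℛ ∘L (𝒱 - 𝒰)) ∘L 𝒞₀ +
      ℛ ∘L (𝒰 ∘L 𝒞₀ - 𝒞τ ∘L 𝒰L) + (ℛ ∘L 𝒞τ - ContinuousLinearMap.id ℂ C) ∘L 𝒰L := by
    ext x
    simp [ContinuousLinearMap.sub_comp, ContinuousLinearMap.comp_sub]
  rw [key]
  have h0 : (0:ℝ) ≤ 1 := zero_le_one
  have h1 : ‖(ℛ ∘L 𝒱) ∘L (ℰ - 𝒞₀)‖ ≤ εenc := by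
    calc ‖(ℛ ∘L 𝒱) ∘L (ℰ - 𝒞₀)‖ ≤ ‖ℛ ∘L 𝒱‖ * ‖ℰ - 𝒞₀‖ := ContinuousLinearMap.opNorm_comp_le _ _
    _ ≤ 1 * εenc := by
        apply mul_le_mul _ henc (norm_nonneg _) h0
        calc ‖ℛ ∘L 𝒱‖ ≤ ‖ℛ‖ * ‖𝒱‖ := ContinuousLinearMap.opNorm_comp_le _ _
        _ ≤ 1 * 1 := mul_le_mul hR hV (norm_nonneg _) h0
        _ = 1 := one_mul 1
    _ = εenc := one_mul _
  have h2 : ‖(ℛ ∘L (𝒱 - 𝒰)) ∘L 𝒞₀‖ ≤ εspread := by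
    calc ‖(ℛ ∘L (𝒱 - 𝒰)) ∘L 𝒞₀‖ ≤ ‖ℛ ∘L (𝒱 - 𝒰)‖ * ‖𝒞₀‖ := ContinuousLinearMap.opNorm_comp_le _ _
    _ ≤ (1 * εspread) * 1 := by
        have hRVU : ‖ℛ ∘L (𝒱 - 𝒰)‖ ≤ 1 * εspread :=
          le_trans (ContinuousLinearMap.opNorm_comp_le _ _)
            (mul_le_mul hR hspread (norm_nonneg _) h0)
        exact mul_le_mul hRVU hC0 (norm_nonneg _) (le_trans (norm_nonneg _) hRVU)
    _ = εspread := by ring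
  have h3 : ‖ℛ ∘L (𝒰 ∘L 𝒞₀ - 𝒞τ ∘L 𝒰L)‖ ≤ εdyn := by
    calc ‖ℛ ∘L (𝒰 ∘L 𝒞₀ - 𝒞τ ∘L 𝒰L)‖ ≤ ‖ℛ‖ * ‖𝒰 ∘L 𝒞₀ - 𝒞τ ∘L 𝒰L‖ :=
        ContinuousLinearMap.opNorm_comp_le _ _
    _ ≤ 1 * εdyn := mul_le_mul hR hdyn (norm_nonneg _) h0
    _ = εdyn := one_mul _
  have h4 : ‖(ℛ ∘L 𝒞τ - ContinuousLinearMap.id ℂ C) ∘L 𝒰L‖ ≤ εrec := by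
    calc ‖(ℛ ∘L 𝒞τ - ContinuousLinearMap.id ℂ C) ∘L 𝒰L‖
        ≤ ‖ℛ ∘L 𝒞τ - ContinuousLinearMap.id ℂ C‖ * ‖𝒰L‖ := ContinuousLinearMap.opNorm_comp_le _ _
    _ ≤ εrec * 1 := mul_le_mul hrec hUL (norm_nonneg _) (le_trans (norm_nonneg _) hrec)
    _ = εrec := mul_one _
  calc ‖_ + _ + _ + _‖ ≤ ‖(ℛ ∘L 𝒱) ∘L (ℰ - 𝒞₀) + (ℛ ∘L (𝒱 - 𝒰)) ∘L 𝒞₀ + ℛ ∘L (𝒰 ∘L 𝒞₀ - 𝒞τ ∘L 𝒰L)‖ + ‖(ℛ ∘L 𝒞τ - ContinuousLinearMap.id ℂ C) ∘L 𝒰L‖ := norm_add_le _ _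
  _ ≤ (‖(ℛ ∘L 𝒱) ∘L (ℰ - 𝒞₀) + (ℛ ∘L (𝒱 - 𝒰)) ∘L 𝒞₀‖ + ‖ℛ ∘L (𝒰 ∘L 𝒞₀ - 𝒞τ ∘L 𝒰L)‖) + _ := by
      gcongr; exact norm_add_le _ _
  _ ≤ ((‖(ℛ ∘L 𝒱) ∘L (ℰ - 𝒞₀)‖ + ‖(ℛ ∘L (𝒱 - 𝒰)) ∘L 𝒞₀‖) + ‖ℛ ∘L (𝒰 ∘L 𝒞₀ - 𝒞τ ∘L 𝒰L)‖) + _ := by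
      gcongr; exact norm_add_le _ _
  _ ≤ ((εenc + εspread) + εdyn) + εrec := by gcongr
  _ = εenc + εrec + εdyn + εspread := by ring
end

section
/- Let m and n be nonempty finite types and let K be a complex matrix indexed by m × n (i.e. K : Matrix (m × n) (m × n) ℂ). Define the normalized partial trace over the first factor L : Matrix n n ℂ by L j j' = (1 / card m) · Σ_{i ∈ m} K (i,j) (i,j'), and let K̃ := 1_m ⊗ L be the Kronecker product of the m × m identity with L (indexed by m × n). Then, with respect to the ℓ²-operator norm on matrices, ‖K̃ − K‖ ≤ sup over U in the unitary group of m × m complex matrices of ‖(U ⊗ 1_n) · K − K · (U ⊗ 1_n)‖. -/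
open Matrix
open scoped Kronecker


namespace TwirlAux

/-- Sign attached to a boolean. -/
def eps (b : Bool) : ℂ := if b then 1 else -1

lemma eps_mul_self (b : Bool) : eps b * eps b = 1 := by cases b <;> simp [eps]

lemma eps_conj (b : Bool) : (starRingEnd ℂ) (eps b) = eps b := by cases b <;> simp [eps]

lemma eps_not (b : Bool) : eps (!b) = - eps b := by cases b <;> simp [eps]

variable {m : Type*} [Fintype m] [DecidableEq m]

lemma sum_eps_mul (a b : m) :
    ∑ s : m → Bool, eps (s a) * eps (s b) =
      if a = b then (2 ^ Fintype.card m : ℂ) else 0 := by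
  rcases eq_or_ne a b with rfl | hab
  · simp only [if_pos rfl]
    rw [Finset.sum_congr rfl (fun s _ => eps_mul_self (s a))]
    simp [Finset.card_univ, Fintype.card_fun]
  · rw [if_neg hab]
    refine Finset.sum_ninvolution (fun s => Function.update s a (!s a)) ?_ ?_ ?_ ?_
    · intro s
      have h1 : Function.update s a (!s a) a = !s a := by simp
      have h2 : Function.update s a (!s a) b = s b := Function.update_of_ne (Ne.symm hab) _ _
      show eps (s a) * eps (s b) + eps (Function.update s a (!s a) a) * eps (Function.update s a (!s a) b) = 0
      rw [h1, h2, eps_not]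
      ring
    · intro s _
      intro h
      have := congrFun h a
      simp at this
    · intro s; exact Finset.mem_univ _
    · intro s
      funext x
      rcases eq_or_ne x a with rfl | hx
      · simp
      · simp [Function.update_of_ne hx]

end TwirlAux

namespace TwirlAux2
open TwirlAux
set_option linter.unusedSectionVars false

variable {m n : Type*} [Fintype m] [DecidableEq m] [Nonempty m]
  [Fintype n] [DecidableEq n] [Nonempty n]

variable (em : m ≃ ZMod (Fintype.card m))

/-- shift permutation -/
def tau (a : m) : m ≃ m := em.trans ((Equiv.subRight (em a)).trans em.symm)

lemma tau_apply (a i : m) : tau em a i = em.symm (em i - em a) := rfl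

/-- For fixed `i`, `a ↦ tau a i` is a bijection. -/
def shiftEquiv (i : m) : m ≃ m := em.trans ((Equiv.subLeft (em i)).trans em.symm)

lemma shiftEquiv_apply (i a : m) : shiftEquiv em i a = tau em a i := rfl

def Umat (s : m → Bool) (a : m) : Matrix m m ℂ :=
  Matrix.of fun i p => if p = tau em a i then eps (s p) else 0

lemma Umat_mem (s : m → Bool) (a : m) : Umat em s a ∈ Matrix.unitaryGroup m ℂ := by
  rw [Matrix.mem_unitaryGroup_iff]
  ext i i'
  simp only [Matrix.mul_apply, Matrix.star_apply, Umat, Matrix.of_apply, Matrix.one_apply]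
  rw [Finset.sum_eq_single (tau em a i)]
  · rcases eq_or_ne i i' with rfl | hii
    · simp [eps_conj, eps_mul_self, RCLike.star_def]
    · have : tau em a i ≠ tau em a i' := fun h => hii ((tau em a).injective h)
      simp [this, hii]
  · intro p _ hp
    simp [hp]
  · intro h; exact absurd (Finset.mem_univ _) h


lemma kron_conjTranspose (A : Matrix m m ℂ) :
    (A ⊗ₖ (1 : Matrix n n ℂ))ᴴ = Aᴴ ⊗ₖ (1 : Matrix n n ℂ) := by
  ext ⟨i, j⟩ ⟨p, q⟩
  simp only [Matrix.conjTranspose_apply, Matrix.kroneckerMap_apply, _root_.map_mul]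
  rcases eq_or_ne j q with rfl | h
  · simp [Matrix.one_apply]
  · simp [Matrix.one_apply, h, Ne.symm h]

lemma kron_mem (A : Matrix m m ℂ) (hA : A ∈ Matrix.unitaryGroup m ℂ) :
    A ⊗ₖ (1 : Matrix n n ℂ) ∈ Matrix.unitaryGroup (m × n) ℂ := by
  rw [Matrix.mem_unitaryGroup_iff]
  have : star (A ⊗ₖ (1 : Matrix n n ℂ)) = star A ⊗ₖ (1 : Matrix n n ℂ) := by
    rw [Matrix.star_eq_conjTranspose, kron_conjTranspose, Matrix.star_eq_conjTranspose]
  rw [this, ← Matrix.mul_kronecker_mul, Matrix.mem_unitaryGroup_iff.mp hA, one_mul,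
    Matrix.one_kronecker_one]

lemma kmul_left (s : m → Bool) (a : m) (M : Matrix (m × n) (m × n) ℂ)
    (i : m) (j : n) (y : m × n) :
    ((Umat em s a ⊗ₖ (1 : Matrix n n ℂ)) * M) (i, j) y
      = eps (s (tau em a i)) * M (tau em a i, j) y := by
  rw [Matrix.mul_apply, Fintype.sum_prod_type]
  simp only [Matrix.kroneckerMap_apply, Umat, Matrix.of_apply, Matrix.one_apply,
    ite_mul, zero_mul, mul_ite, mul_zero, one_mul, mul_one]
  simp [Finset.sum_ite_eq, Finset.sum_ite_eq']

lemma kmul_right (s : m → Bool) (a : m) (M : Matrix (m × n) (m × n) ℂ)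
    (x : m × n) (i' : m) (j' : n) :
    (M * (Umat em s a ⊗ₖ (1 : Matrix n n ℂ))ᴴ) x (i', j')
      = eps (s (tau em a i')) * M x (tau em a i', j') := by
  rw [Matrix.mul_apply, Fintype.sum_prod_type]
  simp only [Matrix.conjTranspose_apply, Matrix.kroneckerMap_apply, Umat, Matrix.of_apply,
    Matrix.one_apply, _root_.map_mul, apply_ite, _root_.map_one, map_zero, eps_conj,
    ite_mul, zero_mul, mul_ite, mul_zero, one_mul, mul_one]
  simp [Finset.sum_ite_eq, Finset.sum_ite_eq', mul_comm, eps_conj]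


lemma twirl_sum (K : Matrix (m × n) (m × n) ℂ) (L : Matrix n n ℂ)
    (hL : ∀ j j' : n, L j j' = (1 / (Fintype.card m : ℂ)) * ∑ i : m, K (i, j) (i, j')) :
    ∑ s : m → Bool, ∑ a : m,
        (Umat em s a ⊗ₖ (1 : Matrix n n ℂ)) * K * (Umat em s a ⊗ₖ (1 : Matrix n n ℂ))ᴴ
      = ((2 ^ Fintype.card m * Fintype.card m : ℕ) : ℂ) • ((1 : Matrix m m ℂ) ⊗ₖ L) := by
  have hN : (Fintype.card m : ℂ) ≠ 0 := Nat.cast_ne_zero.mpr Fintype.card_ne_zero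
  have hsum : ∀ p p' : n, (∑ i : m, K (i, p) (i, p')) = (Fintype.card m : ℂ) * L p p' := by
    intro p p'; rw [hL p p']; field_simp
  ext ⟨i, j⟩ ⟨i', j'⟩
  simp only [Matrix.sum_apply]
  rw [Finset.sum_comm]
  have inner : ∀ a : m,
      (∑ s : m → Bool,
        ((Umat em s a ⊗ₖ (1 : Matrix n n ℂ)) * K
          * (Umat em s a ⊗ₖ (1 : Matrix n n ℂ))ᴴ) (i, j) (i', j'))
      = (if i = i' then (2 ^ Fintype.card m : ℂ) else 0)
          * K (tau em a i, j) (tau em a i', j') := by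
    intro a
    have h1 : ∀ s : m → Bool,
        ((Umat em s a ⊗ₖ (1 : Matrix n n ℂ)) * K
          * (Umat em s a ⊗ₖ (1 : Matrix n n ℂ))ᴴ) (i, j) (i', j')
        = eps (s (tau em a i)) * eps (s (tau em a i'))
            * K (tau em a i, j) (tau em a i', j') := by
      intro s
      rw [kmul_right em s a, kmul_left em s a]
      ring
    rw [Finset.sum_congr rfl fun s _ => h1 s, ← Finset.sum_mul, sum_eps_mul]
    congr 1
    rw [if_congr (Equiv.apply_eq_iff_eq (tau em a)) rfl rfl]
  rw [Finset.sum_congr rfl fun a _ => inner a]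
  rcases eq_or_ne i i' with rfl | hii
  · simp only [if_pos rfl]
    rw [← Finset.mul_sum]
    have h2 : (∑ a : m, K (tau em a i, j) (tau em a i, j')) = ∑ p : m, K (p, j) (p, j') :=
      Equiv.sum_comp (shiftEquiv em i) (fun p => K (p, j) (p, j'))
    rw [h2, hsum, Matrix.smul_apply, Matrix.kroneckerMap_apply, Matrix.one_apply_eq,
      smul_eq_mul]
    push_cast
    ring
  · simp only [if_neg hii, zero_mul, Finset.sum_const_zero, Matrix.smul_apply,
      Matrix.kroneckerMap_apply, Matrix.one_apply_ne hii, zero_mul, mul_zero, smul_zero]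

end TwirlAux2


set_option synthInstance.maxHeartbeats 1000000
set_option maxHeartbeats 2000000
open TwirlAux TwirlAux2


/-- The ℓ²-operator norm of a square complex matrix (its largest singular value),
realized as the operator norm of the associated Euclidean continuous linear map. -/
noncomputable def l2OpNorm' {ι : Type*} [Fintype ι] [DecidableEq ι]
    (M : Matrix ι ι ℂ) : ℝ :=
  ‖Matrix.toEuclideanCLM (𝕜 := ℂ) M‖

/-- Twirling bound: the distance from `K` to `1 ⊗ (normalized partial trace of K)`
is at most the supremum over unitaries `U` of the commutator norm `‖[U ⊗ 1, K]‖`. -/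
theorem partial_trace_twirl_bound
    (m n : Type*) [Fintype m] [DecidableEq m] [Nonempty m]
    [Fintype n] [DecidableEq n] [Nonempty n]
    (K : Matrix (m × n) (m × n) ℂ)
    (L : Matrix n n ℂ)
    (hL : ∀ j j' : n, L j j' = (1 / (Fintype.card m : ℂ)) * ∑ i : m, K (i, j) (i, j')) :
    l2OpNorm' ((1 : Matrix m m ℂ) ⊗ₖ L - K)
      ≤ ⨆ U : Matrix.unitaryGroup m ℂ,
          l2OpNorm' (((U : Matrix m m ℂ) ⊗ₖ (1 : Matrix n n ℂ)) * K
            - K * ((U : Matrix m m ℂ) ⊗ₖ (1 : Matrix n n ℂ))) := by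
  classical
  set N := Fintype.card m with hNdef
  haveI : NeZero N := ⟨Fintype.card_ne_zero⟩
  obtain em : m ≃ ZMod N := Fintype.equivOfCardEq (by rw [ZMod.card])
  set f := Matrix.toEuclideanCLM (𝕜 := ℂ) (n := m × n) with hf
  set c : ℕ := 2 ^ N * N with hcdef
  have hcpos : 0 < (c : ℝ) := by positivity
  have hcC : (c : ℂ) ≠ 0 := by exact_mod_cast hcpos.ne'
  set V : (m → Bool) → m → Matrix (m × n) (m × n) ℂ :=
    fun s a => Umat em s a ⊗ₖ (1 : Matrix n n ℂ) with hVdef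
  have hVmem : ∀ s a, V s a ∈ Matrix.unitaryGroup (m × n) ℂ :=
    fun s a => kron_mem _ (Umat_mem em s a)
  -- f maps unitaries to unitaries
  have hfu : ∀ (W : Matrix (m × n) (m × n) ℂ), W ∈ unitary _ →
      f W ∈ unitary (EuclideanSpace ℂ (m × n) →L[ℂ] EuclideanSpace ℂ (m × n)) := by
    intro W hW
    rw [Unitary.mem_iff] at hW ⊢
    constructor
    · rw [← map_star, ← _root_.map_mul, hW.1, _root_.map_one]
    · rw [← map_star, ← _root_.map_mul, hW.2, _root_.map_one]
  -- decomposition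
  have hsub : ∀ s a, V s a * K * (V s a)ᴴ - K = (V s a * K - K * V s a) * (V s a)ᴴ := by
    intro s a
    have h1 : V s a * (V s a)ᴴ = 1 := Matrix.mem_unitaryGroup_iff.mp (hVmem s a)
    rw [Matrix.sub_mul, Matrix.mul_assoc K (V s a) ((V s a)ᴴ), h1, Matrix.mul_one]
  have hconst : (∑ _s : m → Bool, ∑ _a : m, K) = ((c : ℕ) : ℂ) • K := by
    rw [Finset.sum_const, Finset.sum_const, Finset.card_univ, Finset.card_univ, smul_smul,
      Nat.cast_smul_eq_nsmul]
    congr 1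
    simp [hcdef, Fintype.card_fun]
    rfl
  have hdecomp : (1 : Matrix m m ℂ) ⊗ₖ L - K
      = ((c : ℂ))⁻¹ • ∑ s : m → Bool, ∑ a : m, (V s a * K - K * V s a) * (V s a)ᴴ := by
    have h2 : ∑ s : m → Bool, ∑ a : m, (V s a * K - K * V s a) * (V s a)ᴴ
        = ((c : ℕ) : ℂ) • ((1 : Matrix m m ℂ) ⊗ₖ L - K) := by
      calc ∑ s : m → Bool, ∑ a : m, (V s a * K - K * V s a) * (V s a)ᴴ
          = ∑ s : m → Bool, ∑ a : m, (V s a * K * (V s a)ᴴ - K) := by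
            refine Finset.sum_congr rfl fun s _ => Finset.sum_congr rfl fun a _ => ?_
            rw [hsub s a]
        _ = (∑ s : m → Bool, ∑ a : m, V s a * K * (V s a)ᴴ)
              - ∑ _s : m → Bool, ∑ _a : m, K := by
            rw [← Finset.sum_sub_distrib]
            refine Finset.sum_congr rfl fun s _ => ?_
            rw [← Finset.sum_sub_distrib]
        _ = ((c : ℕ) : ℂ) • ((1 : Matrix m m ℂ) ⊗ₖ L) - ((c : ℕ) : ℂ) • K := by
            rw [hconst, twirl_sum em K L hL]
        _ = ((c : ℕ) : ℂ) • ((1 : Matrix m m ℂ) ⊗ₖ L - K) := by rw [smul_sub]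
    rw [h2, smul_smul, inv_mul_cancel₀ hcC, one_smul]
  -- the supremum and its boundedness
  set S : ℝ := ⨆ U : Matrix.unitaryGroup m ℂ,
      l2OpNorm' (((U : Matrix m m ℂ) ⊗ₖ (1 : Matrix n n ℂ)) * K
        - K * ((U : Matrix m m ℂ) ⊗ₖ (1 : Matrix n n ℂ))) with hS
  have hbdd : BddAbove (Set.range fun U : Matrix.unitaryGroup m ℂ =>
      l2OpNorm' (((U : Matrix m m ℂ) ⊗ₖ (1 : Matrix n n ℂ)) * K
        - K * ((U : Matrix m m ℂ) ⊗ₖ (1 : Matrix n n ℂ)))) := by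
    refine ⟨2 * l2OpNorm' K, ?_⟩
    rintro x ⟨U, rfl⟩
    have hU : (U : Matrix m m ℂ) ⊗ₖ (1 : Matrix n n ℂ) ∈ Matrix.unitaryGroup (m × n) ℂ :=
      kron_mem _ U.2
    have hfU := hfu _ hU
    calc l2OpNorm' (((U : Matrix m m ℂ) ⊗ₖ (1 : Matrix n n ℂ)) * K
            - K * ((U : Matrix m m ℂ) ⊗ₖ (1 : Matrix n n ℂ)))
        = ‖f (((U : Matrix m m ℂ) ⊗ₖ (1 : Matrix n n ℂ)) * K)
            - f (K * ((U : Matrix m m ℂ) ⊗ₖ (1 : Matrix n n ℂ)))‖ := by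
          rw [l2OpNorm', ← hf, _root_.map_sub]
      _ ≤ ‖f (((U : Matrix m m ℂ) ⊗ₖ (1 : Matrix n n ℂ)) * K)‖
            + ‖f (K * ((U : Matrix m m ℂ) ⊗ₖ (1 : Matrix n n ℂ)))‖ := norm_sub_le _ _
      _ = ‖f K‖ + ‖f K‖ := by
          rw [_root_.map_mul, _root_.map_mul, CStarRing.norm_mem_unitary_mul _ hfU,
            CStarRing.norm_mul_mem_unitary _ hfU]
      _ = 2 * l2OpNorm' K := by rw [l2OpNorm']; ring
  -- each commutator term is at most S
  have hterm : ∀ s a, ‖f (V s a * K - K * V s a)‖ ≤ S := by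
    intro s a
    have := le_ciSup hbdd (⟨Umat em s a, Umat_mem em s a⟩ : Matrix.unitaryGroup m ℂ)
    exact this
  -- main chain
  rw [l2OpNorm', ← hf, hdecomp, _root_.map_smul]
  rw [norm_smul ((c : ℂ))⁻¹ (f (∑ s : m → Bool, ∑ a : m, (V s a * K - K * V s a) * (V s a)ᴴ))]
  have hsumle : ‖f (∑ s : m → Bool, ∑ a : m, (V s a * K - K * V s a) * (V s a)ᴴ)‖
      ≤ (c : ℝ) * S := by
    rw [_root_.map_sum]
    calc ‖∑ s : m → Bool, f (∑ a : m, (V s a * K - K * V s a) * (V s a)ᴴ)‖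
        ≤ ∑ s : m → Bool, ‖f (∑ a : m, (V s a * K - K * V s a) * (V s a)ᴴ)‖ :=
          norm_sum_le _ _
      _ ≤ ∑ _s : m → Bool, ∑ _a : m, S := by
          refine Finset.sum_le_sum fun s _ => ?_
          rw [_root_.map_sum]
          refine (norm_sum_le _ _).trans (Finset.sum_le_sum fun a _ => ?_)
          have hst : (V s a)ᴴ = star (V s a) := rfl
          have hmem : star (V s a) ∈ unitary (Matrix (m × n) (m × n) ℂ) :=
            Unitary.star_mem (hVmem s a)
          rw [hst, _root_.map_mul, CStarRing.norm_mul_mem_unitary _ (hfu _ hmem)]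
          exact hterm s a
      _ = (c : ℝ) * S := by
          rw [Finset.sum_const, Finset.sum_const, Finset.card_univ, Finset.card_univ,
            smul_smul, nsmul_eq_mul]
          push_cast [hcdef, Fintype.card_fun, Fintype.card_bool]
          ring
  calc ‖((c : ℂ))⁻¹‖ * ‖f (∑ s : m → Bool, ∑ a : m, (V s a * K - K * V s a) * (V s a)ᴴ)‖
      ≤ ‖((c : ℂ))⁻¹‖ * ((c : ℝ) * S) := by
        refine mul_le_mul_of_nonneg_left hsumle (norm_nonneg _)
    _ = S := by
        rw [norm_inv]
        have : ‖((c : ℕ) : ℂ)‖ = (c : ℝ) := by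
          rw [Complex.norm_natCast]
        rw [this]
        field_simp
end

section
/- Let v₀ = (1,1,1)/√3, v₁ = (1,−1,−1)/√3, v₂ = (−1,1,−1)/√3, v₃ = (−1,−1,1)/√3 be the vertices of a regular tetrahedron inscribed in the unit sphere of ℝ³, and define the spherical (geodesic) distance between unit vectors x, y as d(x,y) = arccos⟪x,y⟫. Then for every unit vector x ∈ ℝ³: max(d(x,v₀), d(x,v₁)) + max(d(x,v₂), d(x,v₃)) ≥ π. -/
/-- Geodesic (spherical) distance between points of the unit sphere in ℝ³. -/
noncomputable def sphDist (x y : EuclideanSpace ℝ (Fin 3)) : ℝ :=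
  Real.arccos (inner ℝ x y)

/-- Vertices of a regular tetrahedron inscribed in the unit sphere. -/
noncomputable def tetra₀ : EuclideanSpace ℝ (Fin 3) := (Real.sqrt 3)⁻¹ • !₂[1, 1, 1]
noncomputable def tetra₁ : EuclideanSpace ℝ (Fin 3) := (Real.sqrt 3)⁻¹ • !₂[1, -1, -1]
noncomputable def tetra₂ : EuclideanSpace ℝ (Fin 3) := (Real.sqrt 3)⁻¹ • !₂[-1, 1, -1]
noncomputable def tetra₃ : EuclideanSpace ℝ (Fin 3) := (Real.sqrt 3)⁻¹ • !₂[-1, -1, 1]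

private lemma arccos_antitone : Antitone Real.arccos := fun a b h => by
  unfold Real.arccos
  exact sub_le_sub_left (Real.monotone_arcsin h) _

private lemma key_arccos {a b : ℝ} (hab : a + b ≤ 0) :
    Real.pi ≤ Real.arccos a + Real.arccos b := by
  have h1 : Real.arccos (-b) ≤ Real.arccos a := arccos_antitone (by linarith)
  rw [Real.arccos_neg] at h1
  linarith

private lemma t0_apply : ∀ i, (tetra₀ : EuclideanSpace ℝ (Fin 3)) i
    = (Real.sqrt 3)⁻¹ * (![1, 1, 1] : Fin 3 → ℝ) i := fun _ => rfl
private lemma t1_apply : ∀ i, (tetra₁ : EuclideanSpace ℝ (Fin 3)) i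
    = (Real.sqrt 3)⁻¹ * (![1, -1, -1] : Fin 3 → ℝ) i := fun _ => rfl
private lemma t2_apply : ∀ i, (tetra₂ : EuclideanSpace ℝ (Fin 3)) i
    = (Real.sqrt 3)⁻¹ * (![-1, 1, -1] : Fin 3 → ℝ) i := fun _ => rfl
private lemma t3_apply : ∀ i, (tetra₃ : EuclideanSpace ℝ (Fin 3)) i
    = (Real.sqrt 3)⁻¹ * (![-1, -1, 1] : Fin 3 → ℝ) i := fun _ => rfl

/-- For every point `x` of the unit sphere,
`max(d(x,v₀), d(x,v₁)) + max(d(x,v₂), d(x,v₃)) ≥ π` for the tetrahedron vertices. -/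
theorem tetrahedron_causal_discrepancy :
    ∀ x : EuclideanSpace ℝ (Fin 3), ‖x‖ = 1 →
      Real.pi ≤ max (sphDist x tetra₀) (sphDist x tetra₁)
        + max (sphDist x tetra₂) (sphDist x tetra₃) := by
  intro x hx
  have h0 : (inner ℝ x tetra₀ : ℝ) = (√3)⁻¹ * (x 0 + x 1 + x 2) := by
    simp [PiLp.inner_apply, Fin.sum_univ_three, t0_apply]; ring
  have h1 : (inner ℝ x tetra₁ : ℝ) = (√3)⁻¹ * (x 0 - x 1 - x 2) := by
    simp [PiLp.inner_apply, Fin.sum_univ_three, t1_apply]; ring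
  have h2 : (inner ℝ x tetra₂ : ℝ) = (√3)⁻¹ * (-x 0 + x 1 - x 2) := by
    simp [PiLp.inner_apply, Fin.sum_univ_three, t2_apply]; ring
  have h3 : (inner ℝ x tetra₃ : ℝ) = (√3)⁻¹ * (-x 0 - x 1 + x 2) := by
    simp [PiLp.inner_apply, Fin.sum_univ_three, t3_apply]; ring
  rcases le_or_gt ((inner ℝ x tetra₀ : ℝ) + (inner ℝ x tetra₂ : ℝ)) 0 with h | h
  · calc Real.pi ≤ sphDist x tetra₀ + sphDist x tetra₂ := key_arccos h
      _ ≤ _ := add_le_add (le_max_left _ _) (le_max_left _ _)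
  · have h' : (inner ℝ x tetra₁ : ℝ) + (inner ℝ x tetra₃ : ℝ) ≤ 0 := by
      rw [h1, h3]; rw [h0, h2] at h; nlinarith
    calc Real.pi ≤ sphDist x tetra₁ + sphDist x tetra₃ := key_arccos h'
      _ ≤ _ := add_le_add (le_max_right _ _) (le_max_right _ _)
end

section
/- Let H and K be finite-dimensional complex inner product spaces, let O : H → H be a linear operator, let V : K → H be a linear map, let W be a unitary operator on K, and let ε ≥ 0 satisfy ‖V ∘ W − O ∘ V‖ ≤ ε. Then there exists a unitary operator U on H such that ‖V ∘ W − U ∘ V‖ ≤ ε + ‖(O† ∘ O − id_H) ∘ V‖. -/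
open ContinuousLinearMap
open scoped InnerProductSpace

set_option maxHeartbeats 1000000

/-- Unitary reconstruction lemma: a logical unitary `W` approximately
implemented on the code space (image of `V`) by a physical operator `O` is
also approximately implemented by a genuinely unitary physical operator `U`. -/
theorem exists_unitary_approx_implementation
    (H K : Type*) [NormedAddCommGroup H] [InnerProductSpace ℂ H] [FiniteDimensional ℂ H]
    [NormedAddCommGroup K] [InnerProductSpace ℂ K] [FiniteDimensional ℂ K]
    (O : H →L[ℂ] H) (V : K →L[ℂ] H) (W : K →L[ℂ] K) (hW : W ∈ unitary (K →L[ℂ] K))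
    (ε : ℝ) (hε : 0 ≤ ε) (h : ‖V ∘L W - O ∘L V‖ ≤ ε) :
    ∃ U : H →L[ℂ] H, U ∈ unitary (H →L[ℂ] H) ∧
      ‖V ∘L W - U ∘L V‖ ≤ ε + ‖(adjoint O ∘L O - ContinuousLinearMap.id ℂ H) ∘L V‖ := by
  haveI : CompleteSpace H := FiniteDimensional.complete ℂ H
  set A : H →L[ℂ] H := adjoint O ∘L O with hA
  have hApos : 0 ≤ A := by
    rw [ContinuousLinearMap.nonneg_iff_isPositive]
    simpa [hA, ContinuousLinearMap.one_def] using (ContinuousLinearMap.isPositive_one (E := H)).adjoint_conj O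
  set P : H →L[ℂ] H := CFC.sqrt A with hP
  have hPnn : 0 ≤ P := CFC.sqrt_nonneg A
  have hPpos : P.IsPositive := (ContinuousLinearMap.nonneg_iff_isPositive P).mp hPnn
  have hP2 : P ∘L P = A := by
    rw [← ContinuousLinearMap.mul_def]
    exact CFC.sqrt_mul_sqrt_self A hApos
  have hPsymm := ContinuousLinearMap.isSelfAdjoint_iff_isSymmetric.mp hPpos.isSelfAdjoint
  -- ‖P x‖ = ‖O x‖
  have hnorm : ∀ x : H, ‖P x‖ = ‖O x‖ := by
    intro x
    have h1 : (⟪P x, P x⟫_ℂ) = ⟪O x, O x⟫_ℂ := by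
      calc ⟪P x, P x⟫_ℂ = ⟪x, P (P x)⟫_ℂ := hPsymm x (P x)
        _ = ⟪x, A x⟫_ℂ := by rw [← ContinuousLinearMap.comp_apply, hP2]
        _ = ⟪O x, O x⟫_ℂ := by
            rw [hA, ContinuousLinearMap.comp_apply, ContinuousLinearMap.adjoint_inner_right]
    have h3 : ‖P x‖ ^ 2 = ‖O x‖ ^ 2 := by
      rw [← inner_self_eq_norm_sq (𝕜 := ℂ) (P x), ← inner_self_eq_norm_sq (𝕜 := ℂ) (O x), h1]
    nlinarith [norm_nonneg (P x), norm_nonneg (O x)]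
  have hker : LinearMap.ker (P : H →ₗ[ℂ] H) ≤ LinearMap.ker (O : H →ₗ[ℂ] H) := by
    intro x hx
    simp only [LinearMap.mem_ker, ContinuousLinearMap.coe_coe] at hx ⊢
    have := hnorm x
    rw [hx, norm_zero] at this
    exact norm_eq_zero.mp this.symm
  -- Build the isometry on range P
  set S : Submodule ℂ H := LinearMap.range (P : H →ₗ[ℂ] H) with hS
  set e := LinearMap.quotKerEquivRange (P : H →ₗ[ℂ] H) with he
  set q := (LinearMap.ker (P : H →ₗ[ℂ] H)).liftQ (O : H →ₗ[ℂ] H) hker with hq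
  set Llin : S →ₗ[ℂ] H := q ∘ₗ (e.symm : S →ₗ[ℂ] (H ⧸ LinearMap.ker (P : H →ₗ[ℂ] H))) with hLlin
  have hLlin_apply : ∀ (x : H) (hx : P x ∈ S), Llin ⟨P x, hx⟩ = O x := by
    intro x hx
    have hsymm : e.symm ⟨P x, hx⟩ = Submodule.Quotient.mk x := by
      rw [LinearEquiv.symm_apply_eq]
      exact Subtype.ext (by simp [he, LinearMap.quotKerEquivRange_apply_mk])
    simp [hLlin, hsymm, hq, Submodule.liftQ_apply]
  have hLiso : ∀ s : S, ‖Llin s‖ = ‖s‖ := by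
    rintro ⟨y, hy⟩
    obtain ⟨x, rfl⟩ := hy
    simp only [ContinuousLinearMap.coe_coe] at *
    rw [hLlin_apply x ⟨x, rfl⟩, Submodule.coe_norm]
    exact (hnorm x).symm
  set L : S →ₗᵢ[ℂ] H := ⟨Llin, hLiso⟩ with hL
  set Ueq : H ≃ₗᵢ[ℂ] H := L.extend.toLinearIsometryEquiv rfl with hUeq
  set u : unitary (H →L[ℂ] H) :=
    (Unitary.linearIsometryEquiv (𝕜 := ℂ) (H := H)).symm Ueq with hu
  refine ⟨(u : H →L[ℂ] H), u.2, ?_⟩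
  have hUapp : ∀ x : H, (u : H →L[ℂ] H) x = L.extend x := by
    intro x
    rw [hu, Unitary.coe_symm_linearIsometryEquiv_apply]
    simp [hUeq, LinearIsometry.coe_toLinearIsometryEquiv]
  have hUP : ∀ x : H, (u : H →L[ℂ] H) (P x) = O x := by
    intro x
    rw [hUapp]
    have hmem : P x ∈ S := ⟨x, rfl⟩
    have h1 : L.extend ((⟨P x, hmem⟩ : S) : H) = L ⟨P x, hmem⟩ :=
      LinearIsometry.extend_apply L ⟨P x, hmem⟩
    have h2 : L ⟨P x, hmem⟩ = O x := hLlin_apply x hmem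
    rw [← h2, ← h1]
  -- pointwise bound ‖(O - U) x‖ ≤ ‖(A - 1) x‖
  have hpt : ∀ x : H, ‖O x - (u : H →L[ℂ] H) x‖ ≤ ‖A x - x‖ := by
    intro x
    have h1 : O x - (u : H →L[ℂ] H) x = (u : H →L[ℂ] H) (P x - x) := by
      rw [map_sub, hUP]
    have h2 : ‖O x - (u : H →L[ℂ] H) x‖ = ‖P x - x‖ := by
      rw [h1]; exact ContinuousLinearMap.norm_map_of_mem_unitary u.2 _
    set y : H := P x - x with hy
    have h3 : A x - x = P y + y := by
      have hPP : P (P x) = A x := by rw [← ContinuousLinearMap.comp_apply, hP2]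
      simp only [hy, map_sub, hPP]
      abel
    have h4 : ‖P y + y‖ ^ 2 = ‖P y‖ ^ 2 + 2 * RCLike.re ⟪P y, y⟫_ℂ + ‖y‖ ^ 2 :=
      norm_add_sq (𝕜 := ℂ) _ _
    have h5 : 0 ≤ RCLike.re ⟪P y, y⟫_ℂ := hPpos.re_inner_nonneg_left y
    have h6 : ‖y‖ ≤ ‖P y + y‖ := by
      nlinarith [norm_nonneg (P y + y), norm_nonneg y, norm_nonneg (P y)]
    rw [h2, h3]
    exact h6
  -- operator norm bound
  have hop : ‖O ∘L V - (u : H →L[ℂ] H) ∘L V‖ ≤ ‖(A - ContinuousLinearMap.id ℂ H) ∘L V‖ := by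
    refine ContinuousLinearMap.opNorm_le_bound _ (norm_nonneg _) fun k => ?_
    have h0 : (O ∘L V - (u : H →L[ℂ] H) ∘L V) k = O (V k) - (u : H →L[ℂ] H) (V k) := rfl
    rw [h0]
    calc ‖O (V k) - (u : H →L[ℂ] H) (V k)‖ ≤ ‖A (V k) - V k‖ := hpt (V k)
      _ = ‖((A - ContinuousLinearMap.id ℂ H) ∘L V) k‖ := rfl
      _ ≤ ‖(A - ContinuousLinearMap.id ℂ H) ∘L V‖ * ‖k‖ := ContinuousLinearMap.le_opNorm _ _
  calc ‖V ∘L W - (u : H →L[ℂ] H) ∘L V‖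
      ≤ ‖V ∘L W - O ∘L V‖ + ‖O ∘L V - (u : H →L[ℂ] H) ∘L V‖ :=
        norm_sub_le_norm_sub_add_norm_sub _ _ _
    _ ≤ ε + ‖(A - ContinuousLinearMap.id ℂ H) ∘L V‖ := add_le_add h hop
end
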